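/- Let h > 0, ν > 0, let k be a nonzero integer, and let s ∈ ℂ with Re(s) > 0. Let ξ be a positive real satisfying (4/h²)·sinh²(ξh/2) = k², and let γ ∈ ℂ satisfy Re(γ) > 0 and (4/h²)·sinh²(γh/2) = s/ν + k². Define q₁(s) = (exp(−ξh) − exp(−γh))/s. If q₁(s) is real (i.e., its imaginary part is zero), then s is real. -/

import Mathlib

open Complex

set_option maxHeartbeats 1600000 in
/-- If `q₁(s) = (exp(−ξh) − exp(−γh))/s` is real, then `s` is real. -/
theorem stmt_3 (h ν : ℝ) (hh : 0 < h) (hν : 0 < ν)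
    (k : ℤ) (hk : k ≠ 0) (s : ℂ) (hs : 0 < s.re)
    (ξ : ℝ) (hξpos : 0 < ξ)
    (hξ : (4 / h ^ 2) * (Real.sinh (ξ * h / 2)) ^ 2 = (k : ℝ) ^ 2)
    (γ : ℂ) (hγre : 0 < γ.re)
    (hγ : (4 / (h : ℂ) ^ 2) * (Complex.sinh (γ * (h : ℂ) / 2)) ^ 2 = s / (ν : ℂ) + (k : ℂ) ^ 2)
    (hq : (((Complex.exp (-(ξ : ℂ) * (h : ℂ)) - Complex.exp (-γ * (h : ℂ))) / s)).im = 0) :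
    s.im = 0 := by
  have hhR : h ≠ 0 := hh.ne'
  have hνR : ν ≠ 0 := hν.ne'
  have hh0 : (h : ℂ) ≠ 0 := by exact_mod_cast hhR
  have hs0 : s ≠ 0 := fun e => by simp [e] at hs
  set A : ℝ := Real.exp (-(ξ * h)) with hAdef
  have hA0 : 0 < A := Real.exp_pos _
  have hAinv : A * Real.exp (ξ * h) = 1 := by
    rw [hAdef, ← Real.exp_add]; simp
  -- real quadratic relation for A
  have hξ2 : 4 * (Real.sinh (ξ * h / 2)) ^ 2 = (k : ℝ) ^ 2 * h ^ 2 := by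
    field_simp at hξ; rw [mul_comm h ξ] at hξ; linarith
  have hcoshξ : Real.cosh (ξ * h) = 2 * (Real.sinh (ξ * h / 2)) ^ 2 + 1 := by
    rw [show ξ * h = 2 * (ξ * h / 2) by ring, Real.cosh_two_mul, Real.cosh_sq]; ring
  have hsum : Real.exp (ξ * h) + A = 2 + h ^ 2 * (k : ℝ) ^ 2 := by
    have h2 : Real.exp (ξ * h) + A = 2 * Real.cosh (ξ * h) := by
      rw [hAdef, Real.cosh_eq]; ring
    rw [h2, hcoshξ]; linarith
  have hAc : A * A + 1 = (2 + h ^ 2 * (k : ℝ) ^ 2) * A := by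
    nlinarith [hAinv, hsum]
  -- complex quadratic relation for w = exp(-(γ h))
  set w : ℂ := Complex.exp (-(γ * h)) with hwdef
  set u : ℂ := Complex.exp (γ * h) with hudef
  have huw : u * w = 1 := by
    rw [hudef, hwdef, ← Complex.exp_add]; simp
  have hγ2 : 4 * (Complex.sinh (γ * h / 2)) ^ 2 = (s / ν + (k : ℂ) ^ 2) * h ^ 2 := by
    field_simp at hγ; rw [mul_comm (h : ℂ) γ] at hγ; linear_combination hγ
  have hcoshγ : Complex.cosh (γ * h) = 2 * (Complex.sinh (γ * h / 2)) ^ 2 + 1 := by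
    rw [show γ * (h:ℂ) = 2 * (γ * h / 2) by ring, Complex.cosh_two_mul, Complex.cosh_sq]; ring
  have hsumc : u + w = 2 + (h : ℂ) ^ 2 * (s / ν + (k : ℂ) ^ 2) := by
    have h2 : u + w = 2 * Complex.cosh (γ * h) := by
      rw [hudef, hwdef, Complex.cosh]; ring
    rw [h2, hcoshγ]; linear_combination hγ2
  have hww : w * w + 1 = (2 + (h : ℂ) ^ 2 * (s / ν + (k : ℂ) ^ 2)) * w := by
    linear_combination w * hsumc - huw
  -- q is real
  have hAe : (A : ℂ) = Complex.exp (-(ξ : ℂ) * (h : ℂ)) := by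
    rw [hAdef, Complex.ofReal_exp]; push_cast; ring_nf
  set r : ℝ := ((((A : ℂ) - w) / s)).re with hrdef
  have hqre : ((A : ℂ) - w) / s = (r : ℂ) := by
    have him : (((A : ℂ) - w) / s).im = 0 := by
      rw [hAe, hwdef, show -(γ * (h:ℂ)) = -γ * h by ring]; exact hq
    exact Complex.ext rfl (by simpa using him)
  have hwr : w = (A : ℂ) - (r : ℂ) * s := by
    have := (div_eq_iff hs0).mp hqre
    linear_combination -this
  -- the key real-linear equation for s
  have hAcC : (A : ℂ) * A + 1 = (2 + (h : ℂ) ^ 2 * (k : ℂ) ^ 2) * A := by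
    exact_mod_cast hAc
  have key : ((r ^ 2 + h ^ 2 / ν * r : ℝ) : ℂ) * s
      = ((2 * A * r - (2 + h ^ 2 * (k : ℝ) ^ 2) * r + h ^ 2 / ν * A : ℝ) : ℂ) := by
    have h0 : s * (((r ^ 2 + h ^ 2 / ν * r : ℝ) : ℂ) * s
        - ((2 * A * r - (2 + h ^ 2 * (k : ℝ) ^ 2) * r + h ^ 2 / ν * A : ℝ) : ℂ)) = 0 := by
      push_cast
      rw [hwr] at hww
      linear_combination hww - hAcC
    rcases mul_eq_zero.mp h0 with h1 | h1
    · exact absurd h1 hs0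
    · linear_combination h1
  by_cases ha : (r ^ 2 + h ^ 2 / ν * r : ℝ) = 0
  · -- degenerate case: impossible
    exfalso
    rw [ha] at key
    have hb : (2 * A * r - (2 + h ^ 2 * (k : ℝ) ^ 2) * r + h ^ 2 / ν * A : ℝ) = 0 := by
      have : ((2 * A * r - (2 + h ^ 2 * (k : ℝ) ^ 2) * r + h ^ 2 / ν * A : ℝ) : ℂ) = 0 := by
        rw [← key]; simp
      exact_mod_cast this
    have hfac : r * (r + h ^ 2 / ν) = 0 := by linear_combination ha
    rcases mul_eq_zero.mp hfac with hr0 | hr1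
    · rw [hr0] at hb
      have : (0:ℝ) < h ^ 2 / ν * A := by positivity
      nlinarith
    · have hr : r = -(h ^ 2 / ν) := by linarith
      rw [hr] at hb
      -- hb : -(h²/ν)(2A - (2+h²k²)) + h²/ν A = 0, i.e. (h²/ν)(2 + h²k² - A) = 0
      have h1A : (2 + h ^ 2 * (k : ℝ) ^ 2 - A) * A = 1 := by nlinarith [hAc]
      have hApos : (0:ℝ) < 2 + h ^ 2 * (k : ℝ) ^ 2 - A := by
        nlinarith [h1A, hA0]
      have : (0:ℝ) < h ^ 2 / ν * (2 + h ^ 2 * (k : ℝ) ^ 2 - A) := by positivity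
      nlinarith
  · have him := congrArg Complex.im key
    rw [Complex.ofReal_im, Complex.mul_im, Complex.ofReal_im, Complex.ofReal_re] at him
    simp only [zero_mul, add_zero] at him
    exact (mul_eq_zero.mp him).resolve_left ha
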